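/- For 1<q<p, the function ϑ(s₁) = ω_p(s₁)^p − (p/(p−q)) ω_p(s₁)^{p−q} − s₁ + (p/(p−q)) s₁^{(p−q)/(p−1)} is strictly concave on (0,1). -/

import Mathlib

open Real Set

noncomputable def thetaH (p z : ℝ) : ℝ := p * z ^ (p-1) - (p-1) * z ^ p

noncomputable def thetaHd (p z : ℝ) : ℝ :=
  p * ((p-1) * z ^ (p-1-1)) - (p-1) * (p * z ^ (p-1))

noncomputable def thetaF (p q z : ℝ) : ℝ := z ^ p - (p/(p-q)) * z ^ (p-q)

noncomputable def thetaFd (p q z : ℝ) : ℝ :=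
  p * z ^ (p-1) - (p/(p-q)) * ((p-q) * z ^ (p-q-1))

noncomputable def thetaPhi (p q z : ℝ) : ℝ := (z - z ^ (1-q)) / ((p-1)*(1-z))

noncomputable def thetaPhid (p q z : ℝ) : ℝ :=
  ((1 - (1-q) * z ^ (1-q-1)) * ((p-1)*(1-z)) - (z - z ^ (1-q)) * ((p-1)*(-1)))
    / ((p-1)*(1-z))^2

lemma thetaH_hasDerivAt (p : ℝ) {z : ℝ} (hz : 0 < z) :
    HasDerivAt (thetaH p) (thetaHd p z) z :=
  ((Real.hasDerivAt_rpow_const (Or.inl hz.ne')).const_mul p).sub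
    ((Real.hasDerivAt_rpow_const (Or.inl hz.ne')).const_mul (p-1))

lemma thetaF_hasDerivAt (p q : ℝ) {z : ℝ} (hz : 0 < z) :
    HasDerivAt (thetaF p q) (thetaFd p q z) z :=
  (Real.hasDerivAt_rpow_const (Or.inl hz.ne')).sub
    ((Real.hasDerivAt_rpow_const (Or.inl hz.ne')).const_mul (p/(p-q)))

lemma thetaHd_neg {p q : ℝ} (hq : 1 < q) (hpq : q < p) {z : ℝ} (hz : 1 < z) :
    thetaHd p z < 0 := by
  have hz0 : (0:ℝ) < z := by linarith
  have e1 : z ^ (p-1) = z ^ (p-1-1) * z := by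
    rw [← Real.rpow_add_one hz0.ne']; norm_num
  have h2 : (0:ℝ) < z ^ (p-1-1) := Real.rpow_pos_of_pos hz0 _
  have hp : (0:ℝ) < p*(p-1) := by nlinarith
  have h3 : (0:ℝ) < z - 1 := by linarith
  rw [thetaHd, e1]
  nlinarith [mul_pos hp (mul_pos h2 h3)]

lemma thetaFd_eq {p q : ℝ} (hq : 1 < q) (hpq : q < p) {z : ℝ} (hz1 : 1 < z) :
    thetaFd p q z = thetaPhi p q z * thetaHd p z := by
  have hz0 : (0:ℝ) < z := by linarith
  have e1 : z ^ (p-1) = z ^ (p-1-1) * z := by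
    rw [← Real.rpow_add_one hz0.ne']; norm_num
  have e2 : z ^ (p-q-1) = z ^ (p-1-1) * z ^ (1-q) := by
    rw [← Real.rpow_add hz0]; norm_num; ring_nf
  rw [thetaFd, thetaPhi, thetaHd, e1, e2]
  have h1 : p - q ≠ 0 := by linarith
  have h2 : p - 1 ≠ 0 := by linarith
  have h3 : (1:ℝ) - z ≠ 0 := by linarith
  field_simp

lemma thetaPhi_hasDerivAt {p q : ℝ} (hq : 1 < q) (hpq : q < p) {z : ℝ} (hz : 1 < z) :
    HasDerivAt (thetaPhi p q) (thetaPhid p q z) z := by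
  have hz0 : (0:ℝ) < z := by linarith
  have hnum : HasDerivAt (fun t : ℝ => t - t ^ (1-q)) (1 - (1-q) * z ^ (1-q-1)) z :=
    (hasDerivAt_id z).sub (Real.hasDerivAt_rpow_const (Or.inl hz0.ne'))
  have hden : HasDerivAt (fun t : ℝ => (p-1)*(1-t)) ((p-1)*(-1)) z := by
    simpa using (((hasDerivAt_id z).const_sub 1).const_mul (p-1))
  exact hnum.div hden (by intro h; rw [mul_eq_zero] at h; rcases h with h|h <;> nlinarith)

lemma thetaPhid_nonneg {p q : ℝ} (hq : 1 < q) (hpq : q < p) {z : ℝ} (hz : 1 < z) :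
    0 ≤ thetaPhid p q z := by
  have hz0 : (0:ℝ) < z := by linarith
  have hA : z ^ (1-q) * z ^ q = z := by
    rw [← Real.rpow_add hz0]; norm_num
  have hB : z ^ (1-q-1) * z ^ q = 1 := by
    rw [← Real.rpow_add hz0]; norm_num
  have hZq : (0:ℝ) < z ^ q := Real.rpow_pos_of_pos hz0 q
  have bern : 1 + q * (z - 1) ≤ z ^ q := by
    have := one_add_mul_self_le_rpow_one_add (s := z - 1) (by linarith) hq.le
    rwa [show (1:ℝ) + (z-1) = z by ring] at this
  rw [thetaPhid]
  set Nm := (1 - (1-q) * z ^ (1-q-1)) * ((p-1)*(1-z)) - (z - z ^ (1-q)) * ((p-1)*(-1))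
    with hNm
  have h1 : Nm * z ^ q = (p-1) * (z ^ q - (1 + q*(z-1))) := by
    rw [hNm]
    linear_combination (-(1-q)*(p-1)*(1-z)) * hB + (-(p-1)) * hA
  have h2 : 0 ≤ Nm * z ^ q := by
    rw [h1]; have : (0:ℝ) ≤ p - 1 := by linarith
    nlinarith
  have h3 : 0 ≤ Nm := nonneg_of_mul_nonneg_right (mul_comm Nm (z^q) ▸ h2) hZq
  exact div_nonneg h3 (sq_nonneg _)

lemma thetaPhi_mono {p q : ℝ} (hq : 1 < q) (hpq : q < p) {a b : ℝ} (ha : 1 < a)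
    (hab : a < b) : thetaPhi p q a ≤ thetaPhi p q b := by
  have hcont : ContinuousOn (thetaPhi p q) (Icc a b) := fun t ht =>
    (thetaPhi_hasDerivAt hq hpq (lt_of_lt_of_le ha ht.1)).continuousAt.continuousWithinAt
  obtain ⟨ζ, hζ, hs⟩ := exists_hasDerivAt_eq_slope (thetaPhi p q) (thetaPhid p q) hab hcont
    (fun t ht => thetaPhi_hasDerivAt hq hpq (lt_trans ha ht.1))
  have h0 : 0 ≤ (thetaPhi p q b - thetaPhi p q a) / (b - a) := by
    rw [← hs]; exact thetaPhid_nonneg hq hpq (lt_trans ha hζ.1)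
  have hba : (0:ℝ) < b - a := by linarith
  have := (le_div_iff₀ hba).mp h0
  linarith [this]

lemma thetaF_slope {p q : ℝ} (hq : 1 < q) (hpq : q < p) {a b : ℝ} (ha : 1 < a)
    (hab : a < b) : ∃ ξ ∈ Ioo a b,
    thetaF p q b - thetaF p q a = (thetaH p b - thetaH p a) * thetaPhi p q ξ := by
  have ha0 : (0:ℝ) < a := by linarith
  have hfc : ContinuousOn (thetaF p q) (Icc a b) := fun t ht =>
    (thetaF_hasDerivAt p q (lt_of_lt_of_le ha0 ht.1)).continuousAt.continuousWithinAt
  have hgc : ContinuousOn (thetaH p) (Icc a b) := fun t ht =>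
    (thetaH_hasDerivAt p (lt_of_lt_of_le ha0 ht.1)).continuousAt.continuousWithinAt
  obtain ⟨ξ, hξ, heq⟩ := exists_ratio_hasDerivAt_eq_ratio_slope (thetaF p q) (thetaFd p q)
    hab hfc (fun t ht => thetaF_hasDerivAt p q (lt_trans ha0 ht.1)) (thetaH p) (thetaHd p)
    hgc (fun t ht => thetaH_hasDerivAt p (lt_trans ha0 ht.1))
  have hξ1 : 1 < ξ := lt_trans ha hξ.1
  rw [thetaFd_eq hq hpq hξ1] at heq
  refine ⟨ξ, hξ, mul_right_cancel₀ (thetaHd_neg hq hpq hξ1).ne ?_⟩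
  linear_combination -heq

/-- For `1 < q < p`, the function
`ϑ(s₁) = ω_p(s₁)^p - (p/(p-q)) ω_p(s₁)^(p-q) - s₁ + (p/(p-q)) s₁^((p-q)/(p-1))`
is strictly concave on `(0,1)`. -/
theorem theta_strictConcave (p q : ℝ) (hq : 1 < q) (hpq : q < p)
    (ωp : ℝ → ℝ)
    (hωp : ∀ s ∈ Icc (0 : ℝ) 1, ωp s ∈ Icc 1 (p / (p - 1)) ∧
      p * ωp s ^ (p - 1) - (p - 1) * ωp s ^ p = s) :
    StrictConcaveOn ℝ (Ioo 0 1)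
      (fun s₁ : ℝ => ωp s₁ ^ p - (p / (p - q)) * ωp s₁ ^ (p - q)
        - s₁ + (p / (p - q)) * s₁ ^ ((p - q) / (p - 1))) := by
  have hp1 : (1:ℝ) < p := lt_trans hq hpq
  have hp0 : (0:ℝ) < p - 1 := by linarith
  set m : ℝ := p / (p - 1) with hm
  have hm1 : (1:ℝ) < m := (one_lt_div hp0).2 (by linarith)
  have hm0 : (0:ℝ) < m := by linarith
  -- H maps ωp back
  have hH : ∀ s ∈ Icc (0:ℝ) 1, thetaH p (ωp s) = s := fun s hs => (hωp s hs).2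
  have hmem : ∀ s ∈ Icc (0:ℝ) 1, ωp s ∈ Icc 1 m := fun s hs => (hωp s hs).1
  -- H strictly antitone on [1, m]
  have hanti : StrictAntiOn (thetaH p) (Icc 1 m) := by
    apply strictAntiOn_of_deriv_neg (convex_Icc 1 m)
    · exact fun t ht => (thetaH_hasDerivAt p (by linarith [ht.1])).continuousAt.continuousWithinAt
    · intro t ht
      rw [interior_Icc] at ht
      rw [(thetaH_hasDerivAt p (by linarith [ht.1] : (0:ℝ) < t)).deriv]
      exact thetaHd_neg hq hpq ht.1
  have hH1 : thetaH p 1 = 1 := by simp [thetaH, Real.one_rpow]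
  have hHm : thetaH p m = 0 := by
    have hmp : (p-1)*m = p := by rw [hm]; field_simp
    have e : m ^ p = m ^ (p-1) * m := by
      rw [← Real.rpow_add_one hm0.ne']; norm_num
    rw [thetaH, e]
    linear_combination (-(m ^ (p-1)))*hmp
  have h1mem : (1:ℝ) ∈ Icc 1 m := ⟨le_refl _, hm1.le⟩
  have hmmem : m ∈ Icc 1 m := ⟨hm1.le, le_refl _⟩
  have hω1 : ωp 1 = 1 := by
    apply hanti.injOn (hmem 1 (by norm_num)) h1mem
    rw [hH 1 (by norm_num), hH1]
  have hω0 : ωp 0 = m := by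
    apply hanti.injOn (hmem 0 (by norm_num)) hmmem
    rw [hH 0 (by norm_num), hHm]
  -- ωp strictly antitone
  have hωlt : ∀ s ∈ Icc (0:ℝ) 1, ∀ t ∈ Icc (0:ℝ) 1, s < t → ωp t < ωp s := by
    intro s hs t ht hst
    by_contra h
    push_neg at h
    rcases eq_or_lt_of_le h with h | h
    · have : s = t := by rw [← hH s hs, ← hH t ht, h]
      linarith
    · have := hanti (hmem s hs) (hmem t ht) h
      rw [hH s hs, hH t ht] at this
      linarith
  -- bounds for interior points
  have hbnd : ∀ x ∈ Ioo (0:ℝ) 1, 1 < ωp x ∧ ωp x < m := by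
    intro x hx
    have hx01 : x ∈ Icc (0:ℝ) 1 := ⟨hx.1.le, hx.2.le⟩
    constructor
    · have := hωlt x hx01 1 (by norm_num) hx.2
      rwa [hω1] at this
    · have := hωlt 0 (by norm_num) x hx01 hx.1
      rwa [hω0] at this
  -- concavity of the ω-part
  have hg : ConcaveOn ℝ (Ioo (0:ℝ) 1) (fun s => thetaF p q (ωp s)) := by
    rw [concaveOn_iff_slope_anti_adjacent]
    refine ⟨convex_Ioo 0 1, fun x y z hx hz hxy hyz => ?_⟩
    have hy : y ∈ Ioo (0:ℝ) 1 := ⟨hx.1.trans hxy, hyz.trans hz.2⟩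
    have hx01 : x ∈ Icc (0:ℝ) 1 := ⟨hx.1.le, hx.2.le⟩
    have hy01 : y ∈ Icc (0:ℝ) 1 := ⟨hy.1.le, hy.2.le⟩
    have hz01 : z ∈ Icc (0:ℝ) 1 := ⟨hz.1.le, hz.2.le⟩
    have hab : ωp y < ωp x := hωlt x hx01 y hy01 hxy
    have hbc : ωp z < ωp y := hωlt y hy01 z hz01 hyz
    have ha1 : 1 < ωp z := (hbnd z hz).1
    have hb1 : 1 < ωp y := lt_trans ha1 hbc
    obtain ⟨ξ₁, hξ₁, e₁⟩ := thetaF_slope hq hpq hb1 hab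
    obtain ⟨ξ₂, hξ₂, e₂⟩ := thetaF_slope hq hpq ha1 hbc
    rw [hH x hx01, hH y hy01] at e₁
    rw [hH y hy01, hH z hz01] at e₂
    -- e₁ : F (ωp x) - F (ωp y) = (x - y) * φ ξ₁
    -- e₂ : F (ωp y) - F (ωp z) = (y - z) * φ ξ₂
    have hyx : (0:ℝ) < y - x := by linarith
    have hzy : (0:ℝ) < z - y := by linarith
    have r₁ : (thetaF p q (ωp y) - thetaF p q (ωp x)) / (y - x) = thetaPhi p q ξ₁ := by
      rw [show thetaF p q (ωp y) - thetaF p q (ωp x) = (y - x) * thetaPhi p q ξ₁ by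
        linarith [e₁]]
      field_simp
    have r₂ : (thetaF p q (ωp z) - thetaF p q (ωp y)) / (z - y) = thetaPhi p q ξ₂ := by
      rw [show thetaF p q (ωp z) - thetaF p q (ωp y) = (z - y) * thetaPhi p q ξ₂ by
        linarith [e₂]]
      field_simp
    rw [r₁, r₂]
    exact thetaPhi_mono hq hpq (lt_trans ha1 hξ₂.1) (lt_trans hξ₂.2 hξ₁.1)
  -- strict concavity of the s-part
  have hpq0 : (0:ℝ) < p - q := by linarith
  have hc0 : (0:ℝ) < p/(p-q) := div_pos (by linarith) hpq0
  have hα0 : (0:ℝ) < (p-q)/(p-1) := div_pos hpq0 hp0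
  have hα1 : (p-q)/(p-1) < 1 := (div_lt_one hp0).2 (by linarith)
  have hbase : StrictConcaveOn ℝ (Ioo (0:ℝ) 1) (fun s : ℝ => s ^ ((p-q)/(p-1))) :=
    (Real.strictConcaveOn_rpow hα0 hα1).subset (fun x hx => hx.1.le) (convex_Ioo 0 1)
  have hh : StrictConcaveOn ℝ (Ioo (0:ℝ) 1)
      (fun s : ℝ => (p/(p-q)) * s ^ ((p-q)/(p-1)) - s) := by
    refine ⟨convex_Ioo 0 1, fun x hx y hy hxy a b ha hb hab => ?_⟩
    have h := hbase.2 hx hy hxy ha hb hab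
    simp only [smul_eq_mul] at h ⊢
    have h2 := mul_lt_mul_of_pos_left h hc0
    nlinarith [h2]
  have final := hh.add_concaveOn hg
  have hfun : (fun s₁ : ℝ => ωp s₁ ^ p - (p / (p - q)) * ωp s₁ ^ (p - q)
        - s₁ + (p / (p - q)) * s₁ ^ ((p - q) / (p - 1)))
      = (fun s : ℝ => ((p/(p-q)) * s ^ ((p-q)/(p-1)) - s) + thetaF p q (ωp s)) := by
    funext s
    simp only [thetaF]
    ring
  rw [hfun]
  exact final
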